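/- Weight function of the orthogonal polynomials of A_3: Let z₁, z₂, z₃, z₄ be complex numbers of modulus 1 with z₁z₂z₃z₄ = 1, and let u₁, u₂, u₃ denote the first, second and third elementary symmetric functions of z₁, z₂, z₃, z₄. Then the product over all pairs 1 ≤ i < j ≤ 4 of |z_i − z_j|² equals 256 − 27u₁⁴ + 144u₁²u₂ − 128u₂² − 4u₁²u₂³ + 16u₂⁴ − 192u₁u₃ + 18u₁³u₂u₃ − 80u₁u₂²u₃ − 6u₁²u₃² + 144u₂u₃² + u₁²u₂²u₃² − 4u₂³u₃² − 4u₁³u₃³ + 18u₁u₂u₃³ − 27u₃⁴. -/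

import Mathlib

/-- Weight function of the orthogonal polynomials of `A₃`: for `z₁, z₂, z₃, z₄` on the unit
circle with product `1` and `u₁, u₂, u₃` the first, second and third elementary symmetric
functions, the product `∏_{i<j} |z_i − z_j|²` equals the stated polynomial in `u₁, u₂, u₃`. -/
theorem A3_weight_function (z₁ z₂ z₃ z₄ u₁ u₂ u₃ : ℂ)
    (h₁ : ‖z₁‖ = 1) (h₂ : ‖z₂‖ = 1) (h₃ : ‖z₃‖ = 1)
    (h₄ : ‖z₄‖ = 1) (hprod : z₁ * z₂ * z₃ * z₄ = 1)
    (hu₁ : u₁ = z₁ + z₂ + z₃ + z₄)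
    (hu₂ : u₂ = z₁ * z₂ + z₁ * z₃ + z₁ * z₄ + z₂ * z₃ + z₂ * z₄ + z₃ * z₄)
    (hu₃ : u₃ = z₁ * z₂ * z₃ + z₁ * z₂ * z₄ + z₁ * z₃ * z₄ + z₂ * z₃ * z₄) :
    ((‖z₁ - z₂‖ ^ 2 * ‖z₁ - z₃‖ ^ 2 *
        ‖z₁ - z₄‖ ^ 2 * ‖z₂ - z₃‖ ^ 2 *
        ‖z₂ - z₄‖ ^ 2 * ‖z₃ - z₄‖ ^ 2 : ℝ) : ℂ) =
      256 - 27 * u₁ ^ 4 + 144 * u₁ ^ 2 * u₂ - 128 * u₂ ^ 2 - 4 * u₁ ^ 2 * u₂ ^ 3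
        + 16 * u₂ ^ 4 - 192 * u₁ * u₃ + 18 * u₁ ^ 3 * u₂ * u₃ - 80 * u₁ * u₂ ^ 2 * u₃
        - 6 * u₁ ^ 2 * u₃ ^ 2 + 144 * u₂ * u₃ ^ 2 + u₁ ^ 2 * u₂ ^ 2 * u₃ ^ 2
        - 4 * u₂ ^ 3 * u₃ ^ 2 - 4 * u₁ ^ 3 * u₃ ^ 3 + 18 * u₁ * u₂ * u₃ ^ 3
        - 27 * u₃ ^ 4 := by
  have key : ∀ w : ℂ, ((‖w‖ : ℂ)) ^ 2 = w * (starRingEnd ℂ) w := by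
    intro w; rw [← Complex.ofReal_pow, Complex.sq_norm, Complex.mul_conj]
  have hc : ∀ z : ℂ, ‖z‖ = 1 → (starRingEnd ℂ) z = z⁻¹ := by
    intro z hz
    rw [Complex.inv_def, Complex.normSq_eq_norm_sq, hz]
    simp
  simp only [Complex.ofReal_mul, Complex.ofReal_pow]
  simp only [key, map_sub, hc z₁ h₁, hc z₂ h₂, hc z₃ h₃, hc z₄ h₄]
  have hinv1 : z₁⁻¹ = z₂ * z₃ * z₄ := inv_eq_of_mul_eq_one_right (by linear_combination hprod)
  have hinv2 : z₂⁻¹ = z₁ * z₃ * z₄ := inv_eq_of_mul_eq_one_right (by linear_combination hprod)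
  have hinv3 : z₃⁻¹ = z₁ * z₂ * z₄ := inv_eq_of_mul_eq_one_right (by linear_combination hprod)
  have hinv4 : z₄⁻¹ = z₁ * z₂ * z₃ := inv_eq_of_mul_eq_one_right (by linear_combination hprod)
  rw [hinv1, hinv2, hinv3, hinv4]
  subst hu₁ hu₂ hu₃
  have h3 : (z₁ * z₂ * z₃ * z₄) ^ 3 = 1 := by rw [hprod]; exact one_pow 3
  have hD : (z₁ - z₂) * (z₂ * z₃ * z₄ - z₁ * z₃ * z₄) * ((z₁ - z₃) * (z₂ * z₃ * z₄ - z₁ * z₂ * z₄)) *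
      ((z₁ - z₄) * (z₂ * z₃ * z₄ - z₁ * z₂ * z₃)) * ((z₂ - z₃) * (z₁ * z₃ * z₄ - z₁ * z₂ * z₄)) *
      ((z₂ - z₄) * (z₁ * z₃ * z₄ - z₁ * z₂ * z₃)) * ((z₃ - z₄) * (z₁ * z₂ * z₄ - z₁ * z₂ * z₃)) =
      (z₁ - z₂) ^ 2 * (z₁ - z₃) ^ 2 * (z₁ - z₄) ^ 2 * (z₂ - z₃) ^ 2 * (z₂ - z₄) ^ 2 *
        (z₃ - z₄) ^ 2 * (z₁ * z₂ * z₃ * z₄) ^ 3 := by ring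
  rw [hD, h3, mul_one]
  linear_combination (256 * ((z₁*z₂*z₃*z₄)^2 + z₁*z₂*z₃*z₄ + 1)
      + (144 * (z₁+z₂+z₃+z₄)^2 * (z₁*z₂+z₁*z₃+z₁*z₄+z₂*z₃+z₂*z₄+z₃*z₄)
          - 192 * (z₁+z₂+z₃+z₄) * (z₁*z₂*z₃+z₁*z₂*z₄+z₁*z₃*z₄+z₂*z₃*z₄)
          - 128 * (z₁*z₂+z₁*z₃+z₁*z₄+z₂*z₃+z₂*z₄+z₃*z₄)^2
          - 27 * (z₁+z₂+z₃+z₄)^4) * (z₁*z₂*z₃*z₄ + 1)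
      + (144 * (z₁*z₂+z₁*z₃+z₁*z₄+z₂*z₃+z₂*z₄+z₃*z₄) * (z₁*z₂*z₃+z₁*z₂*z₄+z₁*z₃*z₄+z₂*z₃*z₄)^2
          - 6 * (z₁+z₂+z₃+z₄)^2 * (z₁*z₂*z₃+z₁*z₂*z₄+z₁*z₃*z₄+z₂*z₃*z₄)^2
          - 80 * (z₁+z₂+z₃+z₄) * (z₁*z₂+z₁*z₃+z₁*z₄+z₂*z₃+z₂*z₄+z₃*z₄)^2 * (z₁*z₂*z₃+z₁*z₂*z₄+z₁*z₃*z₄+z₂*z₃*z₄)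
          + 18 * (z₁+z₂+z₃+z₄)^3 * (z₁*z₂+z₁*z₃+z₁*z₄+z₂*z₃+z₂*z₄+z₃*z₄) * (z₁*z₂*z₃+z₁*z₂*z₄+z₁*z₃*z₄+z₂*z₃*z₄)
          + 16 * (z₁*z₂+z₁*z₃+z₁*z₄+z₂*z₃+z₂*z₄+z₃*z₄)^4
          - 4 * (z₁+z₂+z₃+z₄)^2 * (z₁*z₂+z₁*z₃+z₁*z₄+z₂*z₃+z₂*z₄+z₃*z₄)^3)) * hprod
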